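/- Suppose nonnegative real sequences (ξ_t), (u_t) and summable nonnegative sequences (η_t), (μ_t) satisfy ξ_{t+1} ≤ (1+η_t)ξ_t - u_t + μ_t for all t. Then (ξ_t) converges and ∑_t u_t < ∞. (Deterministic Robbins–Siegmund lemma.) -/

import Mathlib

open Filter Finset

theorem robbins_siegmund_deterministic (ξ u η μ : ℕ → ℝ)
    (hξ : ∀ t, 0 ≤ ξ t) (hu : ∀ t, 0 ≤ u t) (hη : ∀ t, 0 ≤ η t)
    (hμ : ∀ t, 0 ≤ μ t) (hηs : Summable η) (hμs : Summable μ)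
    (hrec : ∀ t, ξ (t + 1) ≤ (1 + η t) * ξ t - u t + μ t) :
    (∃ l : ℝ, Filter.Tendsto ξ Filter.atTop (nhds l)) ∧ Summable u := by
  set P : ℕ → ℝ := fun t => ∏ s ∈ range t, (1 + η s) with hP
  have hP1 : ∀ t, 1 ≤ P t := by
    intro t
    show (1:ℝ) ≤ ∏ s ∈ range t, (1 + η s)
    calc (1:ℝ) = ∏ s ∈ range t, 1 := (Finset.prod_const_one).symm
      _ ≤ ∏ s ∈ range t, (1 + η s) := by
          apply Finset.prod_le_prod
          · intro s _; norm_num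
          · intro s _; linarith [hη s]
  have hPpos : ∀ t, 0 < P t := fun t => lt_of_lt_of_le one_pos (hP1 t)
  have hPsucc : ∀ t, P (t + 1) = P t * (1 + η t) := fun t =>
    Finset.prod_range_succ _ _
  set C := Real.exp (∑' s, η s) with hC
  have hPle : ∀ t, P t ≤ C := by
    intro t
    calc P t ≤ ∏ s ∈ range t, Real.exp (η s) := by
          apply Finset.prod_le_prod
          · intro s _; linarith [hη s]
          · intro s _; rw [add_comm]; exact Real.add_one_le_exp _
      _ = Real.exp (∑ s ∈ range t, η s) := (Real.exp_sum _ _).symm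
      _ ≤ C := Real.exp_le_exp.mpr (Summable.sum_le_tsum _ (fun s _ => hη s) hηs)
  set W : ℕ → ℝ := fun t => ξ t / P t with hWdef
  set v : ℕ → ℝ := fun t => u t / P (t + 1) with hvdef
  set m : ℕ → ℝ := fun t => μ t / P (t + 1) with hmdef
  have hv0 : ∀ t, 0 ≤ v t := fun t => div_nonneg (hu t) (hPpos _).le
  have hm0 : ∀ t, 0 ≤ m t := fun t => div_nonneg (hμ t) (hPpos _).le
  have hmle : ∀ t, m t ≤ μ t := by
    intro t
    rw [hmdef]
    simp only
    rw [div_le_iff₀ (hPpos _)]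
    nlinarith [hμ t, hP1 (t + 1)]
  have hms : Summable m := Summable.of_nonneg_of_le hm0 hmle hμs
  have hW0 : ∀ t, 0 ≤ W t := fun t => div_nonneg (hξ t) (hPpos t).le
  have hWrec : ∀ t, W (t + 1) ≤ W t - v t + m t := by
    intro t
    have hpt : (0 : ℝ) < P t := hPpos t
    have hpt1 : (0 : ℝ) < 1 + η t := by linarith [hη t]
    have h1 : W t - v t + m t = ((1 + η t) * ξ t - u t + μ t) / P (t + 1) := by
      simp only [hWdef, hvdef, hmdef, hPsucc t]
      field_simp
    rw [h1]
    exact div_le_div_of_nonneg_right (hrec t) (hPpos (t + 1)).le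
  set A : ℕ → ℝ := fun t => W t + ∑ s ∈ range t, (v s - m s) with hAdef
  have hAanti : Antitone A := by
    apply antitone_nat_of_succ_le
    intro t
    simp only [hAdef, Finset.sum_range_succ]
    have := hWrec t
    linarith
  have hAlb : ∀ t, -(∑' s, m s) ≤ A t := by
    intro t
    have h1 : ∑ s ∈ range t, m s ≤ ∑' s, m s := Summable.sum_le_tsum _ (fun s _ => hm0 s) hms
    have h2 : 0 ≤ ∑ s ∈ range t, v s := Finset.sum_nonneg fun s _ => hv0 s
    have : ∑ s ∈ range t, (v s - m s) = ∑ s ∈ range t, v s - ∑ s ∈ range t, m s :=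
      Finset.sum_sub_distrib _ _
    simp only [hAdef]
    rw [this]
    linarith [hW0 t]
  have hAbdd : BddBelow (Set.range A) := ⟨-(∑' s, m s), by rintro x ⟨t, rfl⟩; exact hAlb t⟩
  have hAlim : Tendsto A atTop (nhds (⨅ t, A t)) := tendsto_atTop_ciInf hAanti hAbdd
  -- summability of v
  have hvsumle : ∀ t, ∑ s ∈ range t, v s ≤ A 0 + ∑' s, m s := by
    intro t
    have h1 : A t ≤ A 0 := hAanti (Nat.zero_le t)
    have h2 : ∑ s ∈ range t, m s ≤ ∑' s, m s := Summable.sum_le_tsum _ (fun s _ => hm0 s) hms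
    have h3 : ∑ s ∈ range t, (v s - m s) = ∑ s ∈ range t, v s - ∑ s ∈ range t, m s :=
      Finset.sum_sub_distrib _ _
    have h4 : A t = W t + (∑ s ∈ range t, v s - ∑ s ∈ range t, m s) := by
      simp only [hAdef]; rw [h3]
    linarith [hW0 t]
  have hvs : Summable v := summable_of_sum_range_le hv0 hvsumle
  have hus : Summable u := by
    apply Summable.of_nonneg_of_le hu (fun t => ?_) (hvs.mul_left C)
    have : u t = v t * P (t + 1) := by
      simp only [hvdef]
      rw [div_mul_cancel₀ _ (hPpos (t + 1)).ne']
    rw [this]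
    calc v t * P (t + 1) ≤ v t * C := by
          apply mul_le_mul_of_nonneg_left (hPle _) (hv0 t)
      _ = C * v t := mul_comm _ _
  refine ⟨?_, hus⟩
  -- W converges
  have hsub : Summable (fun s => v s - m s) := hvs.sub hms
  have hTlim : Tendsto (fun t => ∑ s ∈ range t, (v s - m s)) atTop
      (nhds (∑' s, (v s - m s))) := hsub.hasSum.tendsto_sum_nat
  have hWlim : Tendsto W atTop (nhds ((⨅ t, A t) - ∑' s, (v s - m s))) := by
    have : W = fun t => A t - ∑ s ∈ range t, (v s - m s) := by
      funext t; simp only [hAdef]; ring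
    rw [this]
    exact hAlim.sub hTlim
  -- P converges
  have hPmono : Monotone P := by
    apply monotone_nat_of_le_succ
    intro t
    rw [hPsucc t]
    nlinarith [hPpos t, hη t]
  have hPbdd : BddAbove (Set.range P) := ⟨C, by rintro x ⟨t, rfl⟩; exact hPle t⟩
  have hPlim : Tendsto P atTop (nhds (⨆ t, P t)) := tendsto_atTop_ciSup hPmono hPbdd
  refine ⟨((⨅ t, A t) - ∑' s, (v s - m s)) * (⨆ t, P t), ?_⟩
  have : ξ = fun t => W t * P t := by
    funext t
    simp only [hWdef]
    rw [div_mul_cancel₀ _ (hPpos t).ne']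
  rw [this]
  exact hWlim.mul hPlim
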